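/- The map from (ℂ \ {0})⁴ to the group SL₂(ℂ[z]) sending (t₁, t₂, t₃, t₄) to the product x₂(t₄) x₁(t₃) x₂(t₂) x₁(t₁) is injective. -/

import Mathlib

open Polynomial

/-- The one-parameter subgroup `x₁(t) = exp(t e₁)` inside `SL₂(ℂ[z])`. -/
noncomputable def x₁ (t : ℂ) : Matrix (Fin 2) (Fin 2) (Polynomial ℂ) :=
  !![1, C t; 0, 1]

/-- The one-parameter subgroup `x₂(t) = exp(t e₂)` inside `SL₂(ℂ[z])`. -/
noncomputable def x₂ (t : ℂ) : Matrix (Fin 2) (Fin 2) (Polynomial ℂ) :=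
  !![1, 0; C t * X, 1]

/-- Explicit formula for the product `x₂(d) x₁(c) x₂(b) x₁(a)`. -/
lemma x2121_prod_formula (a b c d : ℂ) :
    x₂ d * x₁ c * x₂ b * x₁ a =
      !![1 + C (b*c) * X, C (a+c) + C (a*b*c) * X;
         C (b+d) * X + C (b*c*d) * X^2,
         1 + C (a*b + a*d + c*d) * X + C (a*b*c*d) * X^2] := by
  refine Matrix.ext fun i j => ?_
  fin_cases i <;> fin_cases j <;>
    simp [x₁, x₂, Matrix.mul_apply, Fin.sum_univ_two] <;> ring

/-- The map `(ℂ*)⁴ → SL₂(ℂ[z])`, `(t₁,t₂,t₃,t₄) ↦ x₂(t₄)x₁(t₃)x₂(t₂)x₁(t₁)`,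
is injective. -/
theorem x2121_injective (t₁ t₂ t₃ t₄ s₁ s₂ s₃ s₄ : ℂ)
    (ht₁ : t₁ ≠ 0) (ht₂ : t₂ ≠ 0) (ht₃ : t₃ ≠ 0) (ht₄ : t₄ ≠ 0)
    (hs₁ : s₁ ≠ 0) (hs₂ : s₂ ≠ 0) (hs₃ : s₃ ≠ 0) (hs₄ : s₄ ≠ 0)
    (h : x₂ t₄ * x₁ t₃ * x₂ t₂ * x₁ t₁ = x₂ s₄ * x₁ s₃ * x₂ s₂ * x₁ s₁) :
    t₁ = s₁ ∧ t₂ = s₂ ∧ t₃ = s₃ ∧ t₄ = s₄ := by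
  rw [x2121_prod_formula, x2121_prod_formula] at h
  have h00 := congrFun (congrFun h 0) 0
  have h01 := congrFun (congrFun h 0) 1
  have h10 := congrFun (congrFun h 1) 0
  simp only [Matrix.of_apply, Matrix.cons_val_zero, Matrix.cons_val_one, Matrix.head_cons] at h00 h01 h10
  have e23 : t₂ * t₃ = s₂ * s₃ := by
    have := congrArg (fun p => p.coeff 1) h00
    simpa using this
  have e13sum : t₁ + t₃ = s₁ + s₃ := by
    have := congrArg (fun p => p.coeff 0) h01
    simpa using this
  have e123 : t₁ * (t₂ * t₃) = s₁ * (s₂ * s₃) := by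
    have := congrArg (fun p => p.coeff 1) h01
    simpa [mul_assoc] using this
  have e24sum : t₂ + t₄ = s₂ + s₄ := by
    have := congrArg (fun p => p.coeff 1) h10
    simpa [mul_assoc, coeff_X_pow] using this
  have h1 : t₁ = s₁ := by
    rw [e23] at e123
    exact mul_right_cancel₀ (mul_ne_zero hs₂ hs₃) e123
  have h3 : t₃ = s₃ := by linear_combination e13sum - h1
  have h2 : t₂ = s₂ := by
    rw [h3] at e23
    exact mul_right_cancel₀ hs₃ e23
  have h4 : t₄ = s₄ := by linear_combination e24sum - h2
  exact ⟨h1, h2, h3, h4⟩
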